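/- Let W = {w_1, ..., w_R} be N-periodic windows with l(w_r) ≤ N/2 for all r, such that the R × N matrix (|w_r(n)|²)_{1≤r≤R, 0≤n≤N−1} has rank N. Then any x ∈ ℂ^N for which G̃(x, W, N) is connected can be recovered up to a global phase from the magnitudes |X_{w_r}(0, k)| (1 ≤ r ≤ R, 0 ≤ k ≤ N−1). -/

import Mathlib

open scoped ComplexConjugate
open Finset

/-- Multiple-window short-time Fourier transform. -/
noncomputable def stft {N : ℕ} [NeZero N] (L : ℕ) (x w : ZMod N → ℂ) (m k : ℕ) : ℂ :=
  (N : ℂ)⁻¹ * ∑ n : ZMod N, x n * w (((L * m : ℕ) : ZMod N) - n) *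
    Complex.exp (-(2 * Real.pi * Complex.I * (k : ℂ) * (n.val : ℂ)) / (N : ℂ))

noncomputable def myT {N : ℕ} [NeZero N] (f : ZMod N → ℂ) (κ : ZMod N) : ℂ :=
  ∑ n : ZMod N, f n * ZMod.stdAddChar (-κ * n)

lemma conj_stdAddChar {N : ℕ} [NeZero N] (t : ZMod N) :
    conj (ZMod.stdAddChar t) = ZMod.stdAddChar (-t) := by
  rw [ZMod.stdAddChar_apply, ZMod.stdAddChar_apply, ← Circle.coe_inv_eq_conj,
    ← AddChar.map_neg_eq_inv]

lemma corr {N : ℕ} [NeZero N] (f : ZMod N → ℂ) (s : ZMod N) :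
    ∑ κ : ZMod N, myT f κ * conj (myT f κ) * ZMod.stdAddChar (κ * s)
      = (N : ℂ) * ∑ n : ZMod N, f n * conj (f (n - s)) := by
  have key : ∀ κ : ZMod N, myT f κ * conj (myT f κ) * ZMod.stdAddChar (κ * s)
      = ∑ n : ZMod N, ∑ m : ZMod N,
          f n * conj (f m) * ZMod.stdAddChar (κ * (m + s - n)) := by
    intro κ
    unfold myT
    rw [map_sum, sum_mul_sum]
    simp only [Finset.sum_mul]
    refine Finset.sum_congr rfl fun n _ => Finset.sum_congr rfl fun m _ => ?_
    rw [show conj (f m * ZMod.stdAddChar (-κ * m))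
        = conj (f m) * ZMod.stdAddChar (-(-κ * m)) from by rw [map_mul, conj_stdAddChar]]
    have hchar : ZMod.stdAddChar (-κ * n) * ZMod.stdAddChar (-(-κ * m))
        * ZMod.stdAddChar (κ * s) = ZMod.stdAddChar (κ * (m + s - n)) := by
      rw [← AddChar.map_add_eq_mul, ← AddChar.map_add_eq_mul]
      congr 1; ring
    calc f n * ZMod.stdAddChar (-κ * n) * (conj (f m) * ZMod.stdAddChar (-(-κ * m)))
          * ZMod.stdAddChar (κ * s)
        = f n * conj (f m) * (ZMod.stdAddChar (-κ * n) * ZMod.stdAddChar (-(-κ * m))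
          * ZMod.stdAddChar (κ * s)) := by ring
      _ = _ := by rw [hchar]
  rw [Finset.sum_congr rfl fun κ _ => key κ, Finset.sum_comm, Finset.mul_sum]
  refine Finset.sum_congr rfl fun n _ => ?_
  rw [Finset.sum_comm]
  have step : ∀ m : ZMod N,
      ∑ κ : ZMod N, f n * conj (f m) * ZMod.stdAddChar (κ * (m + s - n))
      = f n * conj (f m) * (if m = n - s then (N : ℂ) else 0) := by
    intro m
    rw [← Finset.mul_sum, AddChar.sum_mulShift _ (ZMod.isPrimitive_stdAddChar N)]
    have hiff : m + s - n = 0 ↔ m = n - s := by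
      constructor <;> intro h <;> linear_combination h
    simp only [hiff, ZMod.card, Nat.cast_ite, Nat.cast_zero]
  rw [Finset.sum_congr rfl fun m _ => step m]
  simp only [mul_ite, mul_zero, Finset.sum_ite_eq', Finset.mem_univ, if_true]
  ring

lemma stft_eq {N : ℕ} [NeZero N] (x w : ZMod N → ℂ) (k : ℕ) :
    stft N x w 0 k = (N : ℂ)⁻¹ * myT (fun n => x n * w (-n)) ((k : ZMod N)) := by
  unfold stft myT
  congr 1
  refine Finset.sum_congr rfl fun n _ => ?_
  have h1 : ((N * 0 : ℕ) : ZMod N) - n = -n := by push_cast; ring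
  have h2 : Complex.exp (-(2 * Real.pi * Complex.I * (k : ℂ) * (n.val : ℂ)) / (N : ℂ))
      = ZMod.stdAddChar (-(k : ZMod N) * n) := by
    have : -(k : ZMod N) * n = ((-(k * n.val) : ℤ) : ZMod N) := by
      push_cast [ZMod.natCast_zmod_val]; ring
    rw [this, ZMod.stdAddChar_coe]
    congr 1
    push_cast
    ring
  rw [h1, h2]

lemma autocorr_eq {N : ℕ} [NeZero N] (f g : ZMod N → ℂ)
    (h : ∀ κ : ZMod N, ‖myT f κ‖ = ‖myT g κ‖) (s : ZMod N) :
    ∑ n : ZMod N, f n * conj (f (n - s)) = ∑ n : ZMod N, g n * conj (g (n - s)) := by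
  have hN : (N : ℂ) ≠ 0 := Nat.cast_ne_zero.2 (NeZero.ne N)
  apply mul_left_cancel₀ hN
  rw [← corr f s, ← corr g s]
  refine Finset.sum_congr rfl fun κ _ => ?_
  rw [Complex.mul_conj, Complex.mul_conj]
  congr 2
  rw [← Complex.sq_norm, ← Complex.sq_norm, h κ]

lemma rank_inj {R N : ℕ} [NeZero N] (M : Matrix (Fin R) (ZMod N) ℝ) (h : M.rank = N)
    (v : ZMod N → ℝ) (hv : M.mulVec v = 0) : v = 0 := by
  have hfd := LinearMap.finrank_range_add_finrank_ker M.mulVecLin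
  rw [show Module.finrank ℝ (LinearMap.range M.mulVecLin) = M.rank from rfl, h,
    Module.finrank_fintype_fun_eq_card, ZMod.card] at hfd
  have hker : LinearMap.ker M.mulVecLin = ⊥ :=
    Submodule.finrank_eq_zero.mp (by omega)
  have : v ∈ LinearMap.ker M.mulVecLin := by
    rw [LinearMap.mem_ker, Matrix.mulVecLin_apply, hv]
  rw [hker, Submodule.mem_bot] at this
  exact this

lemma walk_const {V : Type*} {G : SimpleGraph V} (g : V → ℂ)
    (h : ∀ u v, G.Adj u v → g u = g v) : ∀ {u v : V}, G.Walk u v → g u = g v := by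
  intro u v p
  induction p with
  | nil => rfl
  | cons h' p ih => exact (h _ _ h').trans ih

/-- Phase retrieval with masks (`L = N`): if each window `w_r` has supporting length
`l_r ≤ N/2` (support exactly `[a_r, a_r + l_r - 1] + Nℤ`), and the `R × N` matrix
`(|w_r(n)|²)` has rank `N`, then any `x` with `G̃(x, W, N)` connected is determined
up to a global phase by the magnitudes `|X_{w_r}(0, k)|`. -/
theorem stmt13 (N R : ℕ) [NeZero N] (hR : N ≤ R)
    (w : Fin R → ZMod N → ℂ) (a : Fin R → ZMod N) (l : Fin R → ℕ)
    (hl1 : ∀ r, 1 ≤ l r) (hlN : ∀ r, l r ≤ N / 2)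
    (ha : ∀ r, w r (a r) ≠ 0) (hb : ∀ r, w r (a r + ((l r - 1 : ℕ) : ZMod N)) ≠ 0)
    (hsupp : ∀ r, ∀ n : ZMod N, (∀ j < l r, n ≠ a r + (j : ZMod N)) → w r n = 0)
    (hrank : Matrix.rank (Matrix.of fun (r : Fin R) (n : ZMod N) => (‖w r n‖ ^ 2 : ℝ)) = N)
    (x : ZMod N → ℂ)
    (hconn : (SimpleGraph.fromRel (fun n n' : {n : ZMod N // x n ≠ 0} =>
      ∃ r : Fin R,
        (n.1 = -a r ∨ n.1 = -a r - ((l r - 1 : ℕ) : ZMod N)) ∧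
        (n'.1 = -a r ∨ n'.1 = -a r - ((l r - 1 : ℕ) : ZMod N)))).Connected) :
    ∀ y : ZMod N → ℂ,
      (∀ r : Fin R, ∀ k < N, ‖stft N y (w r) 0 k‖ = ‖stft N x (w r) 0 k‖) →
      ∃ θ : ℝ, y = fun n => Complex.exp (Complex.I * θ) * x n := by
  intro y hy
  set s : Fin R → ZMod N := fun r => ((l r - 1 : ℕ) : ZMod N) with hs
  have htwol : ∀ r, 2 * l r ≤ N := fun r => by
    have := hlN r; omega
  have hNinv : ((N : ℝ))⁻¹ ≠ 0 := by
    simp [NeZero.ne N]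
  -- Step A: equal norms of the transforms
  have hT : ∀ r : Fin R, ∀ κ : ZMod N,
      ‖myT (fun n => y n * w r (-n)) κ‖ = ‖myT (fun n => x n * w r (-n)) κ‖ := by
    intro r κ
    have h0 := hy r κ.val (ZMod.val_lt κ)
    rw [stft_eq, stft_eq, ZMod.natCast_zmod_val] at h0
    rw [norm_mul, norm_mul, norm_inv, Complex.norm_natCast] at h0
    exact mul_left_cancel₀ hNinv h0
  -- Step C: equal autocorrelations
  have hauto : ∀ r : Fin R, ∀ σ : ZMod N,
      ∑ n : ZMod N, (y n * w r (-n)) * conj (y (n - σ) * w r (-(n - σ)))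
      = ∑ n : ZMod N, (x n * w r (-n)) * conj (x (n - σ) * w r (-(n - σ))) := by
    intro r σ
    exact autocorr_eq _ _ (hT r) σ
  -- Step D: equal magnitudes pointwise
  have hnormsq : ∀ n : ZMod N, ‖y n‖ ^ 2 = ‖x n‖ ^ 2 := by
    have hrow : ∀ r : Fin R,
        ∑ n : ZMod N, ‖y n‖ ^ 2 * ‖w r (-n)‖ ^ 2
        = ∑ n : ZMod N, ‖x n‖ ^ 2 * ‖w r (-n)‖ ^ 2 := by
      intro r
      have h0 := hauto r 0
      simp only [sub_zero] at h0
      rw [show ∀ z : ZMod N → ℂ, (∑ n : ZMod N, (z n * w r (-n)) * conj (z n * w r (-n)))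
          = ((∑ n : ZMod N, ‖z n‖ ^ 2 * ‖w r (-n)‖ ^ 2 : ℝ) : ℂ) from ?_,
        show ∀ z : ZMod N → ℂ, (∑ n : ZMod N, (z n * w r (-n)) * conj (z n * w r (-n)))
          = ((∑ n : ZMod N, ‖z n‖ ^ 2 * ‖w r (-n)‖ ^ 2 : ℝ) : ℂ) from ?_] at h0
      · exact_mod_cast h0
      all_goals
        intro z
        push_cast
        refine Finset.sum_congr rfl fun n _ => ?_
        rw [Complex.mul_conj]
        push_cast [Complex.normSq_mul, Complex.normSq_eq_norm_sq, map_mul]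
        ring
    set v : ZMod N → ℝ := fun n => ‖y (-n)‖ ^ 2 - ‖x (-n)‖ ^ 2 with hv
    have hveq : v = 0 := by
      apply rank_inj _ hrank
      funext r
      have : (Matrix.of fun (r : Fin R) (n : ZMod N) => (‖w r n‖ ^ 2 : ℝ)).mulVec v r
          = ∑ n : ZMod N, ‖w r n‖ ^ 2 * v n := rfl
      rw [Pi.zero_apply, this]
      have hre : ∑ n : ZMod N, ‖w r n‖ ^ 2 * v n
          = ∑ n : ZMod N, ‖w r (-n)‖ ^ 2 * v (-n) :=
        (Fintype.sum_equiv (Equiv.neg (ZMod N)) _ _ fun n => rfl).symm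
      rw [hre]
      have : ∀ n : ZMod N, ‖w r (-n)‖ ^ 2 * v (-n)
          = ‖y n‖ ^ 2 * ‖w r (-n)‖ ^ 2 - ‖x n‖ ^ 2 * ‖w r (-n)‖ ^ 2 := by
        intro n; simp only [hv, neg_neg]; ring
      rw [Finset.sum_congr rfl fun n _ => this n, Finset.sum_sub_distrib, hrow r, sub_self]
    intro n
    have := congrFun hveq (-n)
    simp only [hv, neg_neg, Pi.zero_apply, sub_eq_zero] at this
    exact this
  have hnorm : ∀ n : ZMod N, ‖y n‖ = ‖x n‖ := fun n => by
    have := hnormsq n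
    nlinarith [norm_nonneg (y n), norm_nonneg (x n)]
  -- Step E: single-term evaluation of the autocorrelation at shift s r
  have hsingle : ∀ (z : ZMod N → ℂ) (r : Fin R),
      ∑ n : ZMod N, (z n * w r (-n)) * conj (z (n - s r) * w r (-(n - s r)))
      = (z (-a r) * w r (a r)) * conj (z (-a r - s r) * w r (a r + s r)) := by
    intro z r
    rw [Finset.sum_eq_single (-a r)]
    · rw [neg_neg, show -(-a r - s r) = a r + s r from by ring]
    · intro n _ hn
      refine ?_
      have hzero : w r (-n) = 0 ∨ w r (-(n - s r)) = 0 := by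
        by_cases h1 : ∀ j < l r, -n ≠ a r + (j : ZMod N)
        · exact Or.inl (hsupp r _ h1)
        by_cases h2 : ∀ j < l r, -(n - s r) ≠ a r + (j : ZMod N)
        · exact Or.inr (hsupp r _ h2)
        exfalso
        push_neg at h1 h2
        obtain ⟨j, hj, hj'⟩ := h1
        obtain ⟨j', hj2, hj2'⟩ := h2
        -- -n = a r + j, s r - n = a r + j'  ⟹  (j' : ZMod N) = (l r - 1 + j : ℕ)
        have hcast : ((j' : ℕ) : ZMod N) = ((l r - 1 + j : ℕ) : ZMod N) := by
          push_cast
          have : -(n - s r) - (-n) = (j' : ZMod N) - j := by rw [hj2', hj']; ring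
          have h3 : s r = (j' : ZMod N) - j := by rw [← this]; ring
          rw [hs] at h3
          push_cast at h3
          linear_combination -h3
        have h2l := htwol r
        have hl1r := hl1 r
        have hjN : j' < N := by omega
        have hlj : l r - 1 + j < N := by omega
        have : j' = l r - 1 + j := by
          have := congrArg ZMod.val hcast
          rwa [ZMod.val_cast_of_lt hjN, ZMod.val_cast_of_lt hlj] at this
        have hj0 : j = 0 := by omega
        apply hn
        rw [hj0] at hj'
        push_cast at hj'
        rw [add_zero] at hj'
        linear_combination -hj'
      rcases hzero with h | h
      · rw [h, mul_zero, zero_mul]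
      · rw [h, mul_zero, map_zero, mul_zero]
    · intro h; exact absurd (Finset.mem_univ _) h
  -- phase relation at the endpoints
  have hphase : ∀ r : Fin R,
      y (-a r) * conj (y (-a r - s r)) = x (-a r) * conj (x (-a r - s r)) := by
    intro r
    have h0 := hauto r (s r)
    rw [hsingle y r, hsingle x r] at h0
    have hwa := ha r
    have hwb := hb r
    have hfac : ∀ z : ZMod N → ℂ,
        (z (-a r) * w r (a r)) * conj (z (-a r - s r) * w r (a r + s r))
        = (w r (a r) * conj (w r (a r + s r))) * (z (-a r) * conj (z (-a r - s r))) := by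
      intro z; rw [map_mul]; ring
    rw [hfac y, hfac x] at h0
    exact mul_left_cancel₀ (mul_ne_zero hwa (by simpa using hwb)) h0
  -- Step F: propagate phase along the graph
  have hcross : ∀ r : Fin R, x (-a r) ≠ 0 → x (-a r - s r) ≠ 0 →
      y (-a r) * x (-a r - s r) = x (-a r) * y (-a r - s r) := by
    intro r hp hq
    set p := -a r
    set q := -a r - s r
    have hBn : Complex.normSq (y q) = Complex.normSq (x q) := by
      rw [Complex.normSq_eq_norm_sq, Complex.normSq_eq_norm_sq, hnorm q]
    have ht : Complex.normSq (x q) ≠ 0 := by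
      simpa [Complex.normSq_eq_zero] using hq
    apply mul_right_cancel₀ (show ((Complex.normSq (x q) : ℂ)) ≠ 0 by exact_mod_cast ht)
    have hA := hphase r
    calc y p * x q * (Complex.normSq (x q) : ℂ)
        = (y p * conj (y q)) * (y q * x q) := by
          rw [← hBn, ← Complex.mul_conj]; ring
      _ = (x p * conj (x q)) * (y q * x q) := by rw [hA]
      _ = x p * y q * (Complex.normSq (x q) : ℂ) := by
          rw [← Complex.mul_conj]; ring
  -- ratio function on vertices
  set V := {n : ZMod N // x n ≠ 0}
  set g : V → ℂ := fun v => y v.1 / x v.1 with hg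
  have hadj : ∀ u v : V,
      (SimpleGraph.fromRel (fun n n' : V =>
        ∃ r : Fin R,
          (n.1 = -a r ∨ n.1 = -a r - ((l r - 1 : ℕ) : ZMod N)) ∧
          (n'.1 = -a r ∨ n'.1 = -a r - ((l r - 1 : ℕ) : ZMod N)))).Adj u v →
      g u = g v := by
    intro u v huv
    rw [SimpleGraph.fromRel_adj] at huv
    obtain ⟨hne, hrel⟩ := huv
    have key : ∀ u' v' : V, u' ≠ v' →
        (∃ r : Fin R, (u'.1 = -a r ∨ u'.1 = -a r - s r) ∧
          (v'.1 = -a r ∨ v'.1 = -a r - s r)) → g u' = g v' := by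
      intro u' v' hne' ⟨r, hu', hv'⟩
      have hne1 : u'.1 ≠ v'.1 := fun h => hne' (Subtype.ext h)
      rcases hu' with h1 | h1 <;> rcases hv' with h2 | h2
      · exact absurd (h1.trans h2.symm) hne1
      · -- u' = -a r, v' = -a r - s r
        have := hcross r (h1 ▸ u'.2) (h2 ▸ v'.2)
        rw [hg]
        simp only [h1, h2]
        rw [div_eq_div_iff (h1 ▸ u'.2) (h2 ▸ v'.2)]
        linear_combination this
      · -- u' = -a r - s r, v' = -a r
        have := hcross r (h2 ▸ v'.2) (h1 ▸ u'.2)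
        rw [hg]
        simp only [h1, h2]
        rw [div_eq_div_iff (h1 ▸ u'.2) (h2 ▸ v'.2)]
        linear_combination -this
      · exact absurd (h1.trans h2.symm) hne1
    rcases hrel with h | h
    · exact key u v hne h
    · exact (key v u hne.symm h).symm
  obtain ⟨v₀⟩ := hconn.nonempty
  set c : ℂ := g v₀ with hc
  have hgv : ∀ v : V, g v = c := by
    intro v
    obtain ⟨pw⟩ := hconn.preconnected v₀ v
    exact (walk_const g hadj pw).symm
  have hyc : ∀ v : V, y v.1 = c * x v.1 := by
    intro v
    have := hgv v
    rw [hg, div_eq_iff v.2] at this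
    exact this
  have hcnorm : ‖c‖ = 1 := by
    rw [hc, hg, norm_div, hnorm v₀.1, div_self (norm_ne_zero_iff.2 v₀.2)]
  refine ⟨c.arg, ?_⟩
  have hexp : Complex.exp (Complex.I * c.arg) = c := by
    have := Complex.norm_mul_exp_arg_mul_I c
    rw [hcnorm] at this
    rw [mul_comm]
    simpa using this
  funext n
  by_cases hxn : x n = 0
  · have : y n = 0 := by
      have := hnorm n
      rw [hxn, norm_zero, norm_eq_zero] at this
      exact this
    rw [this, hxn, mul_zero]
  · rw [hexp, hyc ⟨n, hxn⟩]
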